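/- Let Y be a path-connected Hausdorff space which is first countable at a point y ∈ Y, let A be an abelian group, and let h : π₁(Y,y) → A be a surjective homomorphism. Suppose that for every loop f in Y with base point y there exists a sequence of loops f_n (n ∈ ω) with base point y such that h([f_n]) = h([f]) for all n and the images Im(f_n) converge to y (i.e., for every neighborhood U of y, Im(f_n) ⊆ U for all sufficiently large n). Then A is a cotorsion abelian group, i.e., Ext¹_ℤ(ℚ, A) = 0. -/

import Mathlib

noncomputable section

/-- An abelian group `A` is cotorsion if `Ext¹_ℤ(ℚ, A) = 0`; equivalently, every
short exact sequence `0 → A → B → ℚ → 0` of abelian groups splits. -/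
def IsCotorsion (A : Type) [AddCommGroup A] : Prop :=
  ∀ (B : Type) [AddCommGroup B] (ι : A →+ B) (π : B →+ ℚ),
    Function.Injective ι → Function.Surjective π →
    (∀ b : B, π b = 0 ↔ b ∈ ι.range) →
    ∃ ρ : B →+ A, ρ.comp ι = AddMonoidHom.id A

/-- The element of the fundamental group `π₁(Y, y)` determined by a loop at `y`. -/
def loopClass {Y : Type} [TopologicalSpace Y] {y : Y} (f : Path y y) :
    FundamentalGroup Y y :=
  FundamentalGroup.fromPath (X := TopCat.of Y)
    (Quotient.mk (Path.Homotopic.setoid y y) f)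

open Set CategoryTheory
open scoped Classical


def powRes : ℕ → ℝ → ℝ
  | 0, s => s
  | (m+1), s => if 1/2 ≤ s then 2*s - 1 else powRes m (2*s)

lemma powRes_succ (m : ℕ) (s : ℝ) :
    powRes (m+1) s = if 1/2 ≤ s then 2*s - 1 else powRes m (2*s) := rfl

lemma powRes_mem {s : ℝ} (hs : s ∈ Icc (0:ℝ) 1) : ∀ m, powRes m s ∈ Icc (0:ℝ) 1 := by
  intro m
  induction m generalizing s with
  | zero => exact hs
  | succ m ih =>
    rw [powRes_succ]
    by_cases h : 1/2 ≤ s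
    · rw [if_pos h]; exact ⟨by linarith [hs.1], by linarith [hs.2]⟩
    · rw [if_neg h]
      exact ih ⟨by linarith [hs.1], by linarith [not_le.mp h]⟩

lemma powRes_one : ∀ m, powRes m 1 = 1 := by
  intro m; cases m with
  | zero => rfl
  | succ m => rw [powRes_succ, if_pos (by norm_num)]; ring

lemma powRes_contAt {m : ℕ} {s : ℝ} (h : powRes m s ∈ Ioo (0:ℝ) 1) :
    ContinuousAt (powRes m) s := by
  induction m generalizing s with
  | zero => exact continuousAt_id
  | succ m ih =>
    rcases lt_trichotomy s (1/2) with hlt | heq | hgt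
    · have hev : powRes (m+1) =ᶠ[nhds s] (fun u => powRes m (2*u)) := by
        filter_upwards [Iio_mem_nhds hlt] with u hu
        rw [powRes_succ, if_neg (not_le.mpr hu)]
      have hval : powRes (m+1) s = powRes m (2*s) := by
        rw [powRes_succ, if_neg (not_le.mpr hlt)]
      have hc : ContinuousAt (fun u => powRes m (2*u)) s := by
        have h2 : powRes m (2*s) ∈ Ioo (0:ℝ) 1 := by rwa [hval] at h
        exact (ih h2).comp (by fun_prop)
      exact hc.congr_of_eventuallyEq hev
    · exfalso
      have hval : powRes (m+1) s = 0 := by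
        rw [powRes_succ, if_pos heq.symm.le, heq]; ring
      rw [hval] at h; exact lt_irrefl 0 h.1
    · have hev : powRes (m+1) =ᶠ[nhds s] (fun u => 2*u - 1) := by
        filter_upwards [Ioi_mem_nhds hgt] with u hu
        rw [powRes_succ, if_pos (le_of_lt hu)]
      exact ContinuousAt.congr_of_eventuallyEq (by fun_prop) hev

variable {Y : Type} [TopologicalSpace Y] {y : Y}

def tOrbit (n : ℕ) (t : ℝ) : ℕ → ℝ
  | 0 => t
  | (k+1) => if tOrbit n t k ≤ 1/2 then tOrbit n t k
             else powRes (n+k) (2 * tOrbit n t k - 1)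

lemma tOrbit_zero (n : ℕ) (t : ℝ) : tOrbit n t 0 = t := rfl

lemma tOrbit_succ (n : ℕ) (t : ℝ) (k : ℕ) :
    tOrbit n t (k+1) = if tOrbit n t k ≤ 1/2 then tOrbit n t k
      else powRes (n+k) (2 * tOrbit n t k - 1) := rfl

def Gfun (f : ℕ → Path y y) (n : ℕ) (t : ℝ) : Y :=
  if h : ∃ k, tOrbit n t k ≤ 1/2 then
    (f (n + Nat.find h)).extend (2 * tOrbit n t (Nat.find h))
  else y

lemma tOrbit_shift {n : ℕ} {t : ℝ} (ht : ¬ t ≤ 1/2) (k : ℕ) :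
    tOrbit n t (k+1) = tOrbit (n+1) (powRes n (2*t - 1)) k := by
  induction k with
  | zero => rw [tOrbit_succ, tOrbit_zero, if_neg ht, tOrbit_zero, Nat.add_zero]
  | succ k ih =>
    rw [tOrbit_succ, ih, tOrbit_succ]
    have : n + (k+1) = (n+1) + k := by ring
    rw [this]

lemma Gfun_shift (f : ℕ → Path y y) {n : ℕ} {t : ℝ} (ht : ¬ t ≤ 1/2) :
    Gfun f n t = Gfun f (n+1) (powRes n (2*t - 1)) := by
  unfold Gfun
  by_cases h : ∃ k, tOrbit (n+1) (powRes n (2*t-1)) k ≤ 1/2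
  · have h' : ∃ k, tOrbit n t k ≤ 1/2 :=
      ⟨Nat.find h + 1, by rw [tOrbit_shift ht]; exact Nat.find_spec h⟩
    rw [dif_pos h', dif_pos h]
    have hfind : Nat.find h' = Nat.find h + 1 := by
      rw [Nat.find_eq_iff]
      refine ⟨by rw [tOrbit_shift ht]; exact Nat.find_spec h, ?_⟩
      intro j hj
      cases j with
      | zero => exact ht
      | succ i =>
        rw [tOrbit_shift ht]
        exact Nat.find_min h (by omega)
    have hidx : n + (Nat.find h + 1) = (n+1) + Nat.find h := by omega
    rw [hfind, tOrbit_shift ht, hidx]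
  · have h' : ¬ ∃ k, tOrbit n t k ≤ 1/2 := by
      rintro ⟨k, hk⟩
      cases k with
      | zero => exact ht hk
      | succ k => exact h ⟨k, by rw [← tOrbit_shift ht]; exact hk⟩
    rw [dif_neg h', dif_neg h]

lemma Gfun_of_le (f : ℕ → Path y y) {n : ℕ} {t : ℝ} (ht : t ≤ 1/2) :
    Gfun f n t = (f n).extend (2*t) := by
  unfold Gfun
  have h : ∃ k, tOrbit n t k ≤ 1/2 := ⟨0, ht⟩
  rw [dif_pos h]
  have : Nat.find h = 0 := Nat.find_eq_zero h |>.mpr ht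
  rw [this, tOrbit_zero, Nat.add_zero]
lemma tOrbit_mem {n : ℕ} {t : ℝ} (ht : t ∈ Icc (0:ℝ) 1) (k : ℕ) :
    tOrbit n t k ∈ Icc (0:ℝ) 1 := by
  induction k with
  | zero => exact ht
  | succ k ih =>
    rw [tOrbit_succ]
    by_cases h : tOrbit n t k ≤ 1/2
    · rw [if_pos h]; exact ih
    · rw [if_neg h]
      exact powRes_mem ⟨by linarith [not_le.mp h], by linarith [ih.2]⟩ _

lemma tOrbit_one (n : ℕ) (k : ℕ) : tOrbit n 1 k = 1 := by
  induction k with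
  | zero => rfl
  | succ k ih =>
    rw [tOrbit_succ, ih, if_neg (by norm_num)]
    have : 2 * (1:ℝ) - 1 = 1 := by ring
    rw [this, powRes_one]

lemma Gfun_zero (f : ℕ → Path y y) (n : ℕ) : Gfun f n 0 = y := by
  rw [Gfun_of_le f (by norm_num)]
  norm_num

lemma Gfun_one (f : ℕ → Path y y) (n : ℕ) : Gfun f n 1 = y := by
  unfold Gfun
  rw [dif_neg]
  rintro ⟨k, hk⟩
  rw [tOrbit_one] at hk
  norm_num at hk

/-- Left-associated concatenation power: `powP m g` is `g` concatenated `m+1` times. -/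
def powP (g : Path y y) : ℕ → Path y y
  | 0 => g
  | (m+1) => (powP g m).trans g

lemma trans_extend {a b c : Y} (γ : Path a b) (γ' : Path b c) {s : ℝ}
    (hs : s ∈ Icc (0:ℝ) 1) :
    (γ.trans γ').extend s = if s ≤ 1/2 then γ.extend (2*s) else γ'.extend (2*s - 1) := by
  rw [Path.extend_apply _ hs, Path.trans_apply]
  have hc : ((⟨s, hs⟩ : unitInterval) : ℝ) = s := rfl
  simp only [hc]
  split_ifs with h
  · exact (Path.extend_apply _ _).symm
  · exact (Path.extend_apply _ _).symm

lemma powP_extend (g : Path y y) (m : ℕ) {s : ℝ} (hs : s ∈ Icc (0:ℝ) 1) :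
    (powP g m).extend s = g.extend (powRes m s) := by
  induction m generalizing s with
  | zero => rfl
  | succ m ih =>
    show ((powP g m).trans g).extend s = _
    rw [trans_extend _ _ hs, powRes_succ]
    rcases lt_trichotomy s (1/2) with h|h|h
    · rw [if_pos h.le, if_neg (not_le.mpr h)]
      exact ih ⟨by linarith [hs.1], by linarith⟩
    · rw [if_pos h.le, if_pos h.ge, h]
      norm_num [Path.extend_one, Path.extend_zero]
    · rw [if_neg (not_le.mpr h), if_pos h.le]

/-- Depth-`m` truncation of the infinite concatenation. -/
def trunc (f : ℕ → Path y y) : ℕ → ℕ → Path y y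
  | 0, _ => Path.refl y
  | (m+1), n => (f n).trans (powP (trunc f m (n+1)) n)

lemma trunc_eval_of_term (f : ℕ → Path y y) :
    ∀ m n (t : ℝ), t ∈ Icc (0:ℝ) 1 → (∃ k, k < m ∧ tOrbit n t k ≤ 1/2) →
      (trunc f m n).extend t = Gfun f n t := by
  intro m
  induction m with
  | zero => rintro n t ht ⟨k, hk, -⟩; omega
  | succ m ih =>
    rintro n t ht ⟨k, hk, hk2⟩
    show ((f n).trans (powP (trunc f m (n+1)) n)).extend t = _
    rw [trans_extend _ _ ht]
    by_cases h : t ≤ 1/2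
    · rw [if_pos h, Gfun_of_le f h]
    · rw [if_neg h, powP_extend _ _ ⟨by linarith [not_le.mp h], by linarith [ht.2]⟩,
        Gfun_shift f h]
      have ht1 : powRes n (2*t - 1) ∈ Icc (0:ℝ) 1 :=
        powRes_mem ⟨by linarith [not_le.mp h], by linarith [ht.2]⟩ n
      apply ih (n+1) _ ht1
      cases k with
      | zero => exact absurd hk2 h
      | succ i => exact ⟨i, by omega, by rw [← tOrbit_shift h]; exact hk2⟩

lemma trunc_eval_of_surv (f : ℕ → Path y y) :
    ∀ m n (t : ℝ), t ∈ Icc (0:ℝ) 1 → (∀ k, k < m → ¬ tOrbit n t k ≤ 1/2) →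
      (trunc f m n).extend t = y := by
  intro m
  induction m with
  | zero => intro n t ht _; simp [trunc, Path.refl_extend]
  | succ m ih =>
    intro n t ht hsurv
    have h : ¬ t ≤ 1/2 := hsurv 0 (by omega)
    show ((f n).trans (powP (trunc f m (n+1)) n)).extend t = _
    rw [trans_extend _ _ ht, if_neg h,
      powP_extend _ _ ⟨by linarith [not_le.mp h], by linarith [ht.2]⟩]
    apply ih (n+1) _ (powRes_mem ⟨by linarith [not_le.mp h], by linarith [ht.2]⟩ n)
    intro k hkm
    rw [← tOrbit_shift h]
    exact hsurv (k+1) (by omega)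

lemma Gfun_mem_of_surv (f : ℕ → Path y y) (V : ℕ → Set Y)
    (hyV : ∀ k, y ∈ V k) (hr : ∀ k, Set.range ⇑(f k) ⊆ V k) (hanti : Antitone V)
    (m n : ℕ) (t : ℝ) (ht : t ∈ Icc (0:ℝ) 1)
    (hsurv : ∀ k, k < m → ¬ tOrbit n t k ≤ 1/2) : Gfun f n t ∈ V (n+m) := by
  unfold Gfun
  by_cases hex : ∃ k, tOrbit n t k ≤ 1/2
  · rw [dif_pos hex]
    have hKm : m ≤ Nat.find hex := by
      by_contra hc
      exact hsurv _ (by omega) (Nat.find_spec hex)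
    have htK := tOrbit_mem ht (n := n) (Nat.find hex)
    have h2 : 2 * tOrbit n t (Nat.find hex) ∈ Icc (0:ℝ) 1 :=
      ⟨by linarith [htK.1], by linarith [Nat.find_spec hex]⟩
    rw [Path.extend_apply _ h2]
    exact hanti (by omega) (hr (n + Nat.find hex) ⟨_, rfl⟩)
  · rw [dif_neg hex]; exact hyV _

lemma Gfun_contWithin_ne (f : ℕ → Path y y) :
    ∀ K n (t : ℝ), t ∈ Icc (0:ℝ) 1 → (hex : ∃ k, tOrbit n t k ≤ 1/2) →
      Nat.find hex = K → Gfun f n t ≠ y →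
      ContinuousWithinAt (Gfun f n) (Icc (0:ℝ) 1) t := by
  intro K
  induction K with
  | zero =>
    intro n t ht hex hfind hne
    have h0 : t ≤ 1/2 := by
      have := Nat.find_spec hex; rwa [hfind] at this
    have hlt : t < 1/2 := by
      rcases eq_or_lt_of_le h0 with h | h
      · exfalso; apply hne
        rw [Gfun_of_le f h0, h]
        norm_num [Path.extend_one]
      · exact h
    have hev : Gfun f n =ᶠ[nhds t] (fun u => (f n).extend (2*u)) := by
      filter_upwards [Iio_mem_nhds hlt] with u hu
      exact Gfun_of_le f (le_of_lt hu)
    have hc : ContinuousAt (fun u => (f n).extend (2*u)) t :=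
      (f n).continuous_extend.continuousAt.comp (by fun_prop)
    exact (hc.congr_of_eventuallyEq hev).continuousWithinAt
  | succ K ih =>
    intro n t ht hex hfind hne
    have h0 : ¬ t ≤ 1/2 := by
      intro hc
      have := Nat.find_eq_zero hex |>.mpr hc
      omega
    have ht1' : t < 1 := by
      rcases eq_or_lt_of_le ht.2 with h | h
      · exfalso
        obtain ⟨k, hk⟩ := hex
        rw [h, tOrbit_one] at hk
        norm_num at hk
      · exact h
    set s : ℝ := 2*t - 1 with hs
    have hsI : s ∈ Icc (0:ℝ) 1 := ⟨by simp [hs]; linarith [not_le.mp h0], by simp [hs]; linarith⟩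
    set t1 : ℝ := powRes n s with ht1def
    have ht1I : t1 ∈ Icc (0:ℝ) 1 := powRes_mem hsI n
    have hshift : Gfun f n t = Gfun f (n+1) t1 := Gfun_shift f h0
    have hne1 : Gfun f (n+1) t1 ≠ y := by rwa [hshift] at hne
    have hex1 : ∃ k, tOrbit (n+1) t1 k ≤ 1/2 := by
      refine ⟨K, ?_⟩
      rw [← tOrbit_shift h0]
      have := Nat.find_spec hex; rwa [hfind] at this
    have hfind1 : Nat.find hex1 = K := by
      rw [Nat.find_eq_iff]
      refine ⟨by rw [← tOrbit_shift h0]; have := Nat.find_spec hex; rwa [hfind] at this, ?_⟩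
      intro j hj
      rw [← tOrbit_shift h0]
      exact Nat.find_min hex (by omega)
    have ht1ne0 : t1 ≠ 0 := by
      intro hc
      apply hne1
      rw [hc]
      exact Gfun_zero f (n+1)
    have ht1ne1 : t1 ≠ 1 := by
      intro hc
      obtain ⟨k, hk⟩ := hex1
      rw [hc, tOrbit_one] at hk
      norm_num at hk
    have ht1oo : t1 ∈ Ioo (0:ℝ) 1 :=
      ⟨lt_of_le_of_ne ht1I.1 (Ne.symm ht1ne0), lt_of_le_of_ne ht1I.2 ht1ne1⟩
    have hg : ContinuousAt (fun u : ℝ => powRes n (2*u - 1)) t := by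
      have hp : ContinuousAt (powRes n) s := powRes_contAt (by rwa [← ht1def])
      have hlin : Continuous fun u : ℝ => 2*u - 1 := by continuity
      exact ContinuousAt.comp hp hlin.continuousAt
    have hcomp : ContinuousWithinAt (Gfun f (n+1) ∘ (fun u : ℝ => powRes n (2*u - 1)))
        (Icc (0:ℝ) 1 ∩ Ioi (1/2)) t := by
      refine ContinuousWithinAt.comp (t := Icc (0:ℝ) 1)
        (by exact ih (n+1) t1 ht1I hex1 hfind1 hne1) hg.continuousWithinAt ?_
      intro u hu
      have h1 : (1:ℝ)/2 < u := mem_Ioi.mp hu.2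
      have h2 : u ≤ 1 := hu.1.2
      exact powRes_mem ⟨by linarith, by linarith⟩ n
    have hcongr : ContinuousWithinAt (Gfun f n) (Icc (0:ℝ) 1 ∩ Ioi (1/2)) t := by
      apply hcomp.congr
      · intro u hu
        exact Gfun_shift f (not_le.mpr hu.2)
      · exact Gfun_shift f h0
    apply hcongr.mono_of_mem_nhdsWithin
    exact Filter.inter_mem self_mem_nhdsWithin
      (mem_nhdsWithin_of_mem_nhds (Ioi_mem_nhds (not_le.mp h0)))

theorem Gfun_contWithin (f : ℕ → Path y y) (V : ℕ → Set Y)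
    (hyV : ∀ k, y ∈ V k) (hr : ∀ k, Set.range ⇑(f k) ⊆ V k) (hanti : Antitone V)
    (hbase : ∀ U ∈ nhds y, ∃ j, V j ⊆ U) (n : ℕ) (t : ℝ) (ht : t ∈ Icc (0:ℝ) 1) :
    ContinuousWithinAt (Gfun f n) (Icc (0:ℝ) 1) t := by
  by_cases hy : Gfun f n t = y
  · rw [ContinuousWithinAt, hy, Filter.tendsto_def]
    intro U hU
    show Gfun f n ⁻¹' U ∈ nhdsWithin t (Icc (0:ℝ) 1)
    rw [← Filter.eventually_mem_set]
    obtain ⟨j, hj⟩ := hbase U hU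
    set E : ℝ → Y := ⇑(trunc f j n).extend with hE
    have hEc : Continuous E := (trunc f j n).continuous_extend
    have hEt : E t = y := by
      by_cases hterm : ∃ k, k < j ∧ tOrbit n t k ≤ 1/2
      · rw [hE, trunc_eval_of_term f j n t ht hterm, hy]
      · push_neg at hterm
        exact trunc_eval_of_surv f j n t ht (fun k hk => not_le.mpr (hterm k hk))
    have hEU : ∀ᶠ u in nhds t, E u ∈ U := by
      have : Filter.Tendsto E (nhds t) (nhds y) := hEt ▸ hEc.continuousAt
      exact this hU
    filter_upwards [hEU.filter_mono nhdsWithin_le_nhds, self_mem_nhdsWithin] with u hEu huI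
    show Gfun f n u ∈ U
    by_cases hterm : ∃ k, k < j ∧ tOrbit n u k ≤ 1/2
    · rw [← trunc_eval_of_term f j n u huI hterm]
      exact hEu
    · push_neg at hterm
      apply hj
      have := Gfun_mem_of_surv f V hyV hr hanti j n u huI
        (fun k hk => not_le.mpr (hterm k hk))
      exact hanti (by omega) this
  · have hex : ∃ k, tOrbit n t k ≤ 1/2 := by
      by_contra hc
      apply hy
      unfold Gfun
      rw [dif_neg hc]
    exact Gfun_contWithin_ne f (Nat.find hex) n t ht hex rfl hy

/-- The infinite concatenation as a path, given the smallness data. -/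
def Gpath (f : ℕ → Path y y) (V : ℕ → Set Y)
    (hyV : ∀ k, y ∈ V k) (hr : ∀ k, Set.range ⇑(f k) ⊆ V k) (hanti : Antitone V)
    (hbase : ∀ U ∈ nhds y, ∃ j, V j ⊆ U) (n : ℕ) : Path y y where
  toFun := fun s => Gfun f n (s : ℝ)
  continuous_toFun := by
    have hco : ContinuousOn (Gfun f n) (Icc (0:ℝ) 1) :=
      fun t ht => Gfun_contWithin f V hyV hr hanti hbase n t ht
    exact hco.restrict
  source' := Gfun_zero f n
  target' := Gfun_one f n

lemma Gpath_extend (f : ℕ → Path y y) (V : ℕ → Set Y)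
    (hyV : ∀ k, y ∈ V k) (hr : ∀ k, Set.range ⇑(f k) ⊆ V k) (hanti : Antitone V)
    (hbase : ∀ U ∈ nhds y, ∃ j, V j ⊆ U) (n : ℕ) {s : ℝ} (hs : s ∈ Icc (0:ℝ) 1) :
    (Gpath f V hyV hr hanti hbase n).extend s = Gfun f n s := by
  rw [Path.extend_apply _ hs]
  rfl

lemma Gpath_decomp (f : ℕ → Path y y) (V : ℕ → Set Y)
    (hyV : ∀ k, y ∈ V k) (hr : ∀ k, Set.range ⇑(f k) ⊆ V k) (hanti : Antitone V)
    (hbase : ∀ U ∈ nhds y, ∃ j, V j ⊆ U) (n : ℕ) :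
    Gpath f V hyV hr hanti hbase n =
      (f n).trans (powP (Gpath f V hyV hr hanti hbase (n+1)) n) := by
  ext t
  rcases t with ⟨u, hu⟩
  show Gfun f n u = _
  have : ((f n).trans (powP (Gpath f V hyV hr hanti hbase (n+1)) n)) ⟨u, hu⟩
      = ((f n).trans (powP (Gpath f V hyV hr hanti hbase (n+1)) n)).extend u :=
    (Path.extend_apply _ hu).symm
  rw [this, trans_extend _ _ hu]
  by_cases h : u ≤ 1/2
  · rw [if_pos h, Gfun_of_le f h]
  · have h1 : 2*u - 1 ∈ Icc (0:ℝ) 1 := ⟨by linarith [not_le.mp h], by linarith [hu.2]⟩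
    rw [if_neg h, powP_extend _ _ h1, Gfun_shift f h,
      Gpath_extend f V hyV hr hanti hbase (n+1) (powRes_mem h1 n)]

section FundGroupAux

variable {Y : Type} [TopologicalSpace Y] {y : Y}


lemma loopClass_trans (u v : Path y y) :
    loopClass (u.trans v) = loopClass v * loopClass u := by
  rfl


lemma loopClass_powP (g : Path y y) : ∀ m, loopClass (powP g m) = (loopClass g)^(m+1) := by
  intro m
  induction m with
  | zero => simp [powP]
  | succ m ih =>
    show loopClass ((powP g m).trans g) = _
    rw [loopClass_trans, ih, ← pow_succ']

lemma loopClass_surj (g : FundamentalGroup Y y) : ∃ p : Path y y, loopClass p = g := by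
  obtain ⟨p, hp⟩ := Quotient.exists_rep (FundamentalGroup.toPath (X := TopCat.of Y) g)
  refine ⟨p, ?_⟩
  exact hp

end FundGroupAux

theorem isCotorsion_of_solv {A : Type} [AddCommGroup A]
    (solv : ∀ a : ℕ → A, ∃ b : ℕ → A, ∀ n, b n = a n + (n+1) • b (n+1)) :
    IsCotorsion A := by
  intro B _ ι π hinj hsurjπ hexact
  have hc : ∀ n : ℕ, ∃ x : B, π x = ((n.factorial : ℚ))⁻¹ := fun n => hsurjπ _
  choose c hcspec using hc
  have hd : ∀ n : ℕ, ∃ an : A, ι an = c n - (n+1) • c (n+1) := by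
    intro n
    have hπ : π (c n - (n+1) • c (n+1)) = 0 := by
      rw [map_sub, map_nsmul, hcspec, hcspec]
      have hfact : ((n+1).factorial : ℚ) = (n+1) * (n.factorial : ℚ) := by
        rw [Nat.factorial_succ]; push_cast; ring
      have h1 : (n.factorial : ℚ) ≠ 0 := Nat.cast_ne_zero.mpr (Nat.factorial_ne_zero n)
      have h2 : ((n:ℚ)+1) ≠ 0 := by positivity
      rw [nsmul_eq_mul, hfact]
      push_cast
      field_simp
      ring
    obtain ⟨a, ha⟩ := (hexact _).mp hπ
    exact ⟨a, ha⟩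
  choose a ha using hd
  obtain ⟨b, hb⟩ := solv a
  set e : ℕ → B := fun n => c n - ι (b n) with he_def
  have he : ∀ n, e n = (n+1) • e (n+1) := by
    intro n
    have h1 : ι (b n) = ι (a n) + (n+1) • ι (b (n+1)) := by
      rw [← map_nsmul, ← map_add, ← hb n]
    simp only [he_def]
    rw [smul_sub, h1, ha n]
    abel
  have heπ : ∀ n, π (e n) = ((n.factorial : ℚ))⁻¹ := by
    intro n
    simp only [he_def]
    rw [map_sub, hcspec]
    have : π (ι (b n)) = 0 := (hexact _).mpr ⟨b n, rfl⟩
    rw [this, sub_zero]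
  -- the compatible system W
  set mz : ℚ → ℕ → ℤ := fun q n => q.num * ((n.factorial : ℤ) / (q.den : ℤ)) with hmz
  have hmzcast : ∀ (q : ℚ) (n : ℕ), ((q.den : ℤ) ∣ (n.factorial : ℤ)) →
      ((mz q n : ℤ) : ℚ) = q * (n.factorial : ℚ) := by
    intro q n hdvd
    simp only [hmz, Int.cast_mul, Int.cast_div_charZero hdvd, Int.cast_natCast]
    have hden0 : ((q.den : ℚ)) ≠ 0 := by
      exact_mod_cast Nat.cast_ne_zero.mpr q.den_nz
    have hq := Rat.num_div_den q
    rw [div_eq_iff hden0] at hq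
    field_simp
    rw [hq]
    ring
  set W : ℚ → ℕ → B := fun q n => (mz q n) • e n with hW
  have hWsucc : ∀ (q : ℚ) (n : ℕ), ((q.den : ℤ) ∣ (n.factorial : ℤ)) →
      W q n = W q (n+1) := by
    intro q n hdvd
    have hmzsucc : mz q (n+1) = mz q n * (((n:ℤ))+1) := by
      simp only [hmz]
      rw [Nat.factorial_succ]
      push_cast
      rw [Int.mul_ediv_assoc _ hdvd]
      ring
    show mz q n • e n = mz q (n+1) • e (n+1)
    have h2 : (((n:ℤ))+1) • e (n+1) = e n := by
      have h3 : (((n:ℤ))+1) = (((n+1 : ℕ)):ℤ) := by push_cast; ring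
      rw [h3, natCast_zsmul, ← he n]
    rw [hmzsucc, mul_smul (mz q n) (((n:ℤ))+1) (e (n+1)), h2]
  have hWstab : ∀ (q : ℚ) (n m : ℕ), 0 < n → (q.den : ℕ) ≤ n → n ≤ m → W q n = W q m := by
    intro q n m hn hden hnm
    induction m with
    | zero => omega
    | succ m ih =>
      rcases Nat.lt_or_ge n (m+1) with hlt | hge
      · have hm : n ≤ m := by omega
        rw [ih hm]
        apply hWsucc
        have : (q.den : ℕ) ∣ m.factorial :=
          Nat.dvd_factorial q.pos (by omega)
        exact_mod_cast Int.natCast_dvd_natCast.mpr this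
      · have : n = m+1 := by omega
        rw [this]
  have hdvdden : ∀ (q : ℚ) (n : ℕ), q.den ≤ n → ((q.den : ℤ) ∣ (n.factorial : ℤ)) := by
    intro q n hn
    exact_mod_cast Int.natCast_dvd_natCast.mpr (Nat.dvd_factorial q.pos hn)
  set w : ℚ → B := fun q => W q q.den with hw
  have hwW : ∀ (q : ℚ) (n : ℕ), q.den ≤ n → w q = W q n := by
    intro q n hn
    exact hWstab q q.den n q.pos le_rfl hn
  have hπW : ∀ (q : ℚ) (n : ℕ), q.den ≤ n → π (W q n) = q := by
    intro q n hn
    simp only [hW]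
    rw [map_zsmul, heπ]
    have hcast := hmzcast q n (hdvdden q n hn)
    have hf0 : ((n.factorial : ℚ)) ≠ 0 := Nat.cast_ne_zero.mpr (Nat.factorial_ne_zero n)
    rw [zsmul_eq_mul, hcast]
    field_simp
  have hπw : ∀ q : ℚ, π (w q) = q := fun q => hπW q q.den le_rfl
  have hwadd : ∀ p q : ℚ, w (p + q) = w p + w q := by
    intro p q
    set N : ℕ := p.den + q.den + (p+q).den with hN
    have hp : p.den ≤ N := by omega
    have hq : q.den ≤ N := by omega
    have hpq : (p+q).den ≤ N := by omega
    rw [hwW p N hp, hwW q N hq, hwW (p+q) N hpq]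
    simp only [hW]
    rw [← add_zsmul]
    congr 1
    have hixcast : ((mz (p+q) N : ℤ) : ℚ) = ((mz p N + mz q N : ℤ) : ℚ) := by
      rw [hmzcast _ _ (hdvdden _ _ hpq)]
      push_cast [hmzcast _ _ (hdvdden _ _ hp), hmzcast _ _ (hdvdden _ _ hq)]
      ring
    exact_mod_cast hixcast
  have hw0 : w 0 = 0 := by
    have h0 : (0:ℚ) + 0 = 0 := by norm_num
    have h1 := hwadd 0 0
    rw [h0] at h1
    exact add_eq_left.mp h1.symm
  have hmem : ∀ x : B, ∃ a0 : A, ι a0 = x - w (π x) := by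
    intro x
    have hπ0 : π (x - w (π x)) = 0 := by
      rw [map_sub, hπw, sub_self]
    obtain ⟨a0, ha0⟩ := (hexact _).mp hπ0
    exact ⟨a0, ha0⟩
  choose ρ0 hρ0 using hmem
  have hadd : ∀ x z : B, ρ0 (x + z) = ρ0 x + ρ0 z := by
    intro x z
    apply hinj
    rw [map_add, hρ0, hρ0, hρ0, map_add, hwadd]
    abel
  refine ⟨AddMonoidHom.mk' ρ0 hadd, ?_⟩
  ext a0
  show ρ0 (ι a0) = a0
  apply hinj
  rw [hρ0]
  have hπι : π (ι a0) = 0 := (hexact _).mpr ⟨a0, rfl⟩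
  rw [hπι, hw0, sub_zero]

/-- **Lemma 2.11** (with the corrected conclusion of Herfort–Hojka): if `Y` is a
path-connected Hausdorff space, first countable at `y`, `A` an abelian group, and
`h : π₁(Y,y) → A` a surjective homomorphism such that every loop `f` at `y` admits loops
`f_n` at `y` with `h([f_n]) = h([f])` whose images converge to `y`, then `A` is
cotorsion. -/
theorem cotorsion_of_small_loop_representatives
    (Y : Type) [TopologicalSpace Y] [PathConnectedSpace Y] [T2Space Y]
    (y : Y) (hfc : (nhds y).IsCountablyGenerated)
    (A : Type) [CommGroup A] (h : FundamentalGroup Y y →* A)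
    (hsurj : Function.Surjective h)
    (happrox : ∀ f : Path y y, ∃ F : ℕ → Path y y,
      (∀ n : ℕ, h (loopClass (F n)) = h (loopClass f)) ∧
      (∀ U ∈ nhds y, ∃ N : ℕ, ∀ n ≥ N, Set.range (F n) ⊆ U)) :
    IsCotorsion (Additive A) := by
  apply isCotorsion_of_solv
  intro aAdd
  -- antitone neighborhood basis at `y`
  haveI := hfc
  obtain ⟨V, hV⟩ := (nhds y).exists_antitone_basis
  have hVmem : ∀ k, V k ∈ nhds y := fun k => hV.toHasBasis.mem_of_mem trivial
  have hyV : ∀ k, y ∈ V k := fun k => mem_of_mem_nhds (hVmem k)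
  have hanti : Antitone V := hV.antitone
  have hbase : ∀ U ∈ nhds y, ∃ j, V j ⊆ U := by
    intro U hU
    obtain ⟨j, -, hj⟩ := hV.toHasBasis.mem_iff.mp hU
    exact ⟨j, hj⟩
  set a : ℕ → A := fun n => Additive.toMul (aAdd n) with ha_def
  -- choose small loops representing the classes `a n`
  have hf : ∀ n, ∃ p : Path y y, h (loopClass p) = a n ∧ Set.range ⇑p ⊆ V n := by
    intro n
    obtain ⟨g, hg⟩ := hsurj (a n)
    obtain ⟨p, hp⟩ := loopClass_surj g
    obtain ⟨F, hF1, hF2⟩ := happrox p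
    obtain ⟨N, hN⟩ := hF2 (V n) (hVmem n)
    refine ⟨F N, ?_, hN N le_rfl⟩
    rw [hF1, hp, hg]
  choose f' hf1 hf2 using hf
  -- the infinite concatenation paths and their classes
  set G : ℕ → Path y y := fun n => Gpath f' V hyV hf2 hanti hbase n with hG
  set b : ℕ → A := fun n => h (loopClass (G n)) with hb_def
  have hbrec : ∀ n, b n = a n * (b (n+1))^(n+1) := by
    intro n
    have hdec : G n = (f' n).trans (powP (G (n+1)) n) :=
      Gpath_decomp f' V hyV hf2 hanti hbase n
    rw [hb_def]
    simp only
    rw [hdec, loopClass_trans, map_mul, loopClass_powP, map_pow, hf1 n]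
    exact mul_comm _ _
  refine ⟨fun n => Additive.ofMul (b n), ?_⟩
  intro n
  have := hbrec n
  calc Additive.ofMul (b n) = Additive.ofMul (a n * (b (n+1))^(n+1)) := by rw [← this]
    _ = aAdd n + (n+1) • Additive.ofMul (b (n+1)) := by
        rw [ofMul_mul, ofMul_pow]
        rfl

end
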